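/- Let a : ℕ → ℝ be a bounded sequence whose Birkhoff averages B_n diverge, with cluster set [α_0, β_0]. Suppose that for every γ ∈ [α_0, β_0] there exists ε > 0 such that limsup_{i→∞} n_{i+1}(γ, ε) / n_i(γ, ε) = ∞. Then the intersection ⋂_{k≥0} [α_k, β_k] is a nondegenerate interval, i.e. sup_k α_k < inf_k β_k (type B2). -/

import Mathlib

open Filter Topology

/-- Birkhoff averages: `birk a n = (1/n) * ∑_{i=0}^{n-1} a i` (junk value `0` at `n = 0`). -/
noncomputable def birk (a : ℕ → ℝ) (n : ℕ) : ℝ := (∑ i ∈ Finset.range n, a i) / n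

/-- Iterated Hölder means of a sequence `b` (indexed from 1):
`holderMeans b 0 n = b n` and `holderMeans b (k+1) n = (1/n) * ∑_{i=1}^n holderMeans b k i`. -/
noncomputable def holderMeans (b : ℕ → ℝ) : ℕ → ℕ → ℝ
  | 0, n => b n
  | k+1, n => (∑ i ∈ Finset.Icc 1 n, holderMeans b k i) / n

/-- Return times `n_i(γ, ε)`: the increasing enumeration (0-indexed) of
`{n ≥ 1 : γ - ε < B n < γ + ε}`. -/
noncomputable def returnTimes (B : ℕ → ℝ) (γ ε : ℝ) (i : ℕ) : ℕ :=
  Nat.nth (fun n => 1 ≤ n ∧ γ - ε < B n ∧ B n < γ + ε) i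

namespace B2aux

lemma holder_succ (u : ℕ → ℝ) (k n : ℕ) :
    holderMeans u (k+1) n = (∑ i ∈ Finset.Icc 1 n, holderMeans u k i) / n := rfl

/-- Gap predicate: arbitrarily late gaps with arbitrarily large ratio on which `c ≤ u`. -/
def Gap (u : ℕ → ℝ) (c : ℝ) : Prop :=
  ∀ R : ℝ, ∀ N : ℕ, ∃ p q : ℕ, N ≤ p ∧ 1 ≤ p ∧ R * p ≤ q ∧ p < q ∧
    ∀ m, p < m → m ≤ q → c ≤ u m

lemma birk_rec (a : ℕ → ℝ) (n : ℕ) :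
    birk a (n+1) = ((n:ℝ) * birk a n + a n) / (n+1) := by
  rcases Nat.eq_zero_or_pos n with rfl | hn
  · simp [birk]
  · have hn' : (n:ℝ) ≠ 0 := Nat.cast_ne_zero.2 hn.ne'
    have hn1 : ((n:ℝ)+1) ≠ 0 := by positivity
    unfold birk
    rw [Finset.sum_range_succ]
    push_cast
    field_simp

lemma birk_bound (a : ℕ → ℝ) (C : ℝ) (hC : 0 ≤ C) (ha : ∀ n, |a n| ≤ C) (n : ℕ) :
    |birk a n| ≤ C := by
  rcases Nat.eq_zero_or_pos n with rfl | hn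
  · simpa [birk] using hC
  · have h1 : |∑ i ∈ Finset.range n, a i| ≤ (n:ℝ) * C := by
      calc |∑ i ∈ Finset.range n, a i| ≤ ∑ i ∈ Finset.range n, |a i| :=
            Finset.abs_sum_le_sum_abs _ _
        _ ≤ (Finset.range n).card • C := Finset.sum_le_card_nsmul _ _ _ (fun i _ => ha i)
        _ = (n:ℝ) * C := by simp [nsmul_eq_mul]
    have hn0 : (0:ℝ) < n := by exact_mod_cast hn
    rw [birk, abs_div, abs_of_pos hn0, div_le_iff₀ hn0]
    linarith [h1]

lemma birk_step (a : ℕ → ℝ) (C : ℝ) (hC : 0 ≤ C) (ha : ∀ n, |a n| ≤ C) (n : ℕ) :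
    |birk a (n+1) - birk a n| ≤ 2*C/(n+1) := by
  have hn1 : (0:ℝ) < (n:ℝ)+1 := by positivity
  have hd : birk a (n+1) - birk a n = (a n - birk a n)/((n:ℝ)+1) := by
    rw [birk_rec]
    push_cast
    field_simp
    ring
  have hb := birk_bound a C hC ha n
  have habs : |a n - birk a n| ≤ 2*C := by
    calc |a n - birk a n| ≤ |a n| + |birk a n| := abs_sub _ _
      _ ≤ 2*C := by linarith [ha n]
  rw [hd, abs_div, abs_of_pos hn1]
  push_cast
  gcongr


lemma avg_bound (u : ℕ → ℝ) (C : ℝ) (hC : 0 ≤ C) (hu : ∀ m, 1 ≤ m → |u m| ≤ C) (n : ℕ) :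
    |(∑ i ∈ Finset.Icc 1 n, u i)/n| ≤ C := by
  rcases Nat.eq_zero_or_pos n with rfl | hn
  · simpa using hC
  · have h1 : |∑ i ∈ Finset.Icc 1 n, u i| ≤ (n:ℝ) * C := by
      calc |∑ i ∈ Finset.Icc 1 n, u i| ≤ ∑ i ∈ Finset.Icc 1 n, |u i| :=
            Finset.abs_sum_le_sum_abs _ _
        _ ≤ (Finset.Icc 1 n).card • C :=
            Finset.sum_le_card_nsmul _ _ _ (fun i hi => hu i (Finset.mem_Icc.1 hi).1)
        _ = (n:ℝ) * C := by simp [nsmul_eq_mul, Nat.card_Icc]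
    have hn0 : (0:ℝ) < n := by exact_mod_cast hn
    rw [abs_div, abs_of_pos hn0, div_le_iff₀ hn0]
    linarith [h1]

lemma holder_bound (u : ℕ → ℝ) (C : ℝ) (hC : 0 ≤ C) (hu : ∀ m, 1 ≤ m → |u m| ≤ C) :
    ∀ k m, 1 ≤ m → |holderMeans u k m| ≤ C := by
  intro k
  induction k with
  | zero => exact hu
  | succ k ih =>
    intro m _
    rw [holder_succ]
    exact avg_bound _ C hC ih m

lemma holder_neg (u : ℕ → ℝ) : ∀ k n, holderMeans (fun n => -(u n)) k n = -holderMeans u k n := by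
  intro k
  induction k with
  | zero => intro n; rfl
  | succ k ih =>
    intro n
    rw [holder_succ, holder_succ]
    simp only [ih]
    rw [Finset.sum_neg_distrib, neg_div]

lemma avg_lower (u : ℕ → ℝ) (C c : ℝ) (hC : 0 ≤ C) (hc : c ≤ C)
    (hu : ∀ m, 1 ≤ m → |u m| ≤ C) (p q n : ℕ) (hp : 1 ≤ p) (hpn : p < n) (hnq : n ≤ q)
    (hgap : ∀ m, p < m → m ≤ q → c ≤ u m) :
    c - 2*C*p/n ≤ (∑ i ∈ Finset.Icc 1 n, u i)/n := by
  have hn0 : (0:ℝ) < n := by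
    have : 0 < n := lt_of_le_of_lt (Nat.zero_le p) hpn
    exact_mod_cast this
  have hsplit : ∑ i ∈ Finset.Icc 1 n, u i
      = ∑ i ∈ Finset.Ioc 0 p, u i + ∑ i ∈ Finset.Ioc p n, u i := by
    rw [Finset.sum_Ioc_consecutive u (Nat.zero_le p) hpn.le, ← Finset.Icc_add_one_left_eq_Ioc, zero_add]
  have h1 : -((p:ℝ) * C) ≤ ∑ i ∈ Finset.Ioc 0 p, u i := by
    have := Finset.card_nsmul_le_sum (Finset.Ioc 0 p) u (-C)
      (fun i hi => neg_le_of_abs_le (hu i (Finset.mem_Ioc.1 hi).1))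
    simpa [Nat.card_Ioc, nsmul_eq_mul, mul_neg] using this
  have h2 : ((n:ℝ) - p) * c ≤ ∑ i ∈ Finset.Ioc p n, u i := by
    have := Finset.card_nsmul_le_sum (Finset.Ioc p n) u c
      (fun i hi => hgap i (Finset.mem_Ioc.1 hi).1 ((Finset.mem_Ioc.1 hi).2.trans hnq))
    rw [Nat.card_Ioc, nsmul_eq_mul, Nat.cast_sub hpn.le] at this
    exact this
  rw [hsplit, le_div_iff₀ hn0]
  have he : 2*C*(p:ℝ)/(n:ℝ) * n = 2*C*p := div_mul_cancel₀ _ hn0.ne'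
  have hpc : (p:ℝ) * (C - c) ≥ 0 :=
    mul_nonneg (by positivity) (by linarith)
  nlinarith [h1, h2]


lemma gap_mono (u : ℕ → ℝ) {c c' : ℝ} (hcc : c' ≤ c) (hg : Gap u c) : Gap u c' := by
  intro R N
  obtain ⟨p, q, h1, h2, h3, h4, h5⟩ := hg R N
  exact ⟨p, q, h1, h2, h3, h4, fun m hm hmq => hcc.trans (h5 m hm hmq)⟩

lemma gap_le_C (u : ℕ → ℝ) (C c : ℝ) (hu : ∀ m, 1 ≤ m → |u m| ≤ C) (hg : Gap u c) : c ≤ C := by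
  obtain ⟨p, q, h1, h2, h3, h4, h5⟩ := hg 1 1
  have hq1 : 1 ≤ q := h2.trans h4.le
  exact (h5 q h4 le_rfl).trans (le_of_abs_le (hu q hq1))

lemma gap_frequently (u : ℕ → ℝ) (c : ℝ) (hg : Gap u c) : ∃ᶠ m in atTop, c ≤ u m := by
  rw [frequently_atTop]
  intro N
  obtain ⟨p, q, h1, h2, h3, h4, h5⟩ := hg 1 N
  exact ⟨q, (h1.trans h4.le), h5 q h4 le_rfl⟩

lemma gap_step (u : ℕ → ℝ) (C c δ : ℝ) (hC : 0 ≤ C) (hc : c ≤ C) (hδ : 0 < δ)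
    (hu : ∀ m, 1 ≤ m → |u m| ≤ C) (hgap : Gap u c) :
    Gap (fun n => (∑ i ∈ Finset.Icc 1 n, u i)/n) (c - δ) := by
  intro R N
  obtain ⟨p, q, hNp, hp1, hRq, hpq, hval⟩ := hgap ((max R 1) * (2*C/δ + 3)) N
  set p' := max p ⌈2*C*p/δ⌉₊ with hp'def
  have hp0 : (0:ℝ) < p := by exact_mod_cast hp1
  have hp1' : (1:ℝ) ≤ p := by exact_mod_cast hp1
  have hp'le : (p':ℝ) ≤ (2*C/δ + 2) * p := by
    have h1 : (p:ℝ) ≤ (2*C/δ + 2) * p := by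
      nlinarith [div_nonneg (by linarith : (0:ℝ) ≤ 2*C) hδ.le]
    have h2 : (⌈2*C*p/δ⌉₊ : ℝ) ≤ (2*C/δ + 2) * p := by
      have := Nat.ceil_lt_add_one (by positivity : (0:ℝ) ≤ 2*C*p/δ)
      have hkey : (2*C/δ + 2) * (p:ℝ) = 2*C*p/δ + 2*p := by ring
      linarith [this, hp1', hkey]
    rcases max_cases p ⌈2*C*p/δ⌉₊ with ⟨hm, _⟩ | ⟨hm, _⟩ <;> rw [hp'def, hm]
    · exact h1
    · exact h2
  have hR1 : (1:ℝ) ≤ max R 1 := le_max_right _ _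
  have hRR : R ≤ max R 1 := le_max_left _ _
  have hfac : (0:ℝ) ≤ 2*C/δ + 2 := by positivity
  have hqbig : ((max R 1) * (2*C/δ + 3)) * p ≤ q := hRq
  have hq' : (2*C/δ + 2) * p + p ≤ (q:ℝ) := by
    nlinarith [hqbig, hp0]
  refine ⟨p', q, le_trans hNp (le_max_left _ _), le_trans hp1 (le_max_left _ _), ?_, ?_, ?_⟩
  · -- R * p' ≤ q
    have hp'0 : (0:ℝ) ≤ p' := by positivity
    calc R * (p':ℝ) ≤ max R 1 * p' := by nlinarith
      _ ≤ max R 1 * ((2*C/δ + 2) * p) := by nlinarith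
      _ ≤ (max R 1) * (2*C/δ + 3) * p - p := by nlinarith
      _ ≤ q - p := by linarith
      _ ≤ q := by linarith
  · -- p' < q
    have : (p':ℝ) + p ≤ q := by linarith
    have : (p':ℝ) + 1 ≤ q := by linarith [hp1']
    exact_mod_cast Nat.lt_of_lt_of_le (Nat.lt_succ_self p') (by exact_mod_cast this)
  · intro m hm hmq
    have hpm : p < m := lt_of_le_of_lt (le_max_left _ _) hm
    have hm0 : (0:ℝ) < m := by
      have : 0 < m := Nat.lt_of_le_of_lt (Nat.zero_le _) hm
      exact_mod_cast this
    have hlow := avg_lower u C c hC hc hu p q m hp1 hpm hmq hval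
    have hceil : (⌈2*C*p/δ⌉₊:ℝ) ≤ p' := by exact_mod_cast (le_max_right p _)
    have hmc : 2*C*(p:ℝ)/δ ≤ m := by
      have h1 : 2*C*(p:ℝ)/δ ≤ ⌈2*C*p/δ⌉₊ := Nat.le_ceil _
      have h2 : (p':ℝ) < m := by exact_mod_cast hm
      linarith
    have hfrac : 2*C*(p:ℝ)/m ≤ δ := by
      rw [div_le_iff₀ hm0]
      rw [div_le_iff₀ hδ] at hmc
      linarith
    have : c - δ ≤ c - 2*C*(p:ℝ)/m := by linarith
    exact this.trans hlow

lemma gap_holder (u : ℕ → ℝ) (C : ℝ) (hC : 0 ≤ C) (hu : ∀ m, 1 ≤ m → |u m| ≤ C) :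
    ∀ (k : ℕ) (c δ : ℝ), c ≤ C → 0 < δ → Gap u c → Gap (holderMeans u k) (c - δ) := by
  intro k
  induction k with
  | zero =>
    intro c δ hc hδ hg
    exact gap_mono u (by linarith) hg
  | succ k ih =>
    intro c δ hc hδ hg
    have h1 : Gap (holderMeans u k) (c - δ/2) := ih c (δ/2) hc (by linarith) hg
    have h2 := gap_step (holderMeans u k) C (c - δ/2) (δ/2) hC (by linarith) (by linarith)
      (holder_bound u C hC hu k) h1
    have he : c - δ/2 - δ/2 = c - δ := by ring
    rw [he] at h2
    exact h2


lemma cesaro_limsup (u : ℕ → ℝ) (C : ℝ) (hC : 0 ≤ C) (hu : ∀ m, 1 ≤ m → |u m| ≤ C) :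
    limsup (fun n => (∑ i ∈ Finset.Icc 1 n, u i)/(n:ℝ)) atTop ≤ limsup u atTop := by
  have hble : IsBoundedUnder (· ≤ ·) atTop u :=
    isBoundedUnder_of_eventually_le (a := C)
      ((eventually_ge_atTop 1).mono fun m hm => le_of_abs_le (hu m hm))
  have hv : ∀ n, |(∑ i ∈ Finset.Icc 1 n, u i)/(n:ℝ)| ≤ C := avg_bound u C hC hu
  have hvcob : IsCoboundedUnder (· ≤ ·) atTop (fun n => (∑ i ∈ Finset.Icc 1 n, u i)/(n:ℝ)) :=
    IsBoundedUnder.isCoboundedUnder_le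
      (isBoundedUnder_of_eventually_ge (a := -C)
        (Eventually.of_forall fun n => neg_le_of_abs_le (hv n)))
  set L := limsup u atTop with hLdef
  refine le_of_forall_sub_le fun d hd => sub_le_iff_le_add.2 ?_
  have hev : ∀ᶠ m in atTop, u m < L + d/2 :=
    eventually_lt_of_limsup_lt (by linarith) hble
  obtain ⟨N₀, hN₀⟩ := eventually_atTop.1 hev
  set N := max N₀ 1 with hNdef
  have hN1 : 1 ≤ N := le_max_right _ _
  have hN0 : N₀ ≤ N := le_max_left _ _
  set K : ℝ := (N:ℝ) * (C + |L| + d) with hKdef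
  have hK0 : 0 ≤ K := by positivity
  have hev2 : ∀ᶠ n in atTop, (∑ i ∈ Finset.Icc 1 n, u i)/(n:ℝ) ≤ L + d := by
    rw [eventually_atTop]
    refine ⟨max N ⌈2*K/d⌉₊, fun n hn => ?_⟩
    have hnN : N ≤ n := le_trans (le_max_left _ _) hn
    have hn1 : 1 ≤ n := hN1.trans hnN
    have hn0 : (0:ℝ) < n := by exact_mod_cast hn1
    have hNn : (N:ℝ) ≤ n := by exact_mod_cast hnN
    have hN1' : (1:ℝ) ≤ N := by exact_mod_cast hN1
    have hsplit : ∑ i ∈ Finset.Icc 1 n, u i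
        = ∑ i ∈ Finset.Ioc 0 (N-1), u i + ∑ i ∈ Finset.Ioc (N-1) n, u i := by
      have h0 : Finset.Icc 1 n = Finset.Ioc 0 n := by rw [← Finset.Icc_add_one_left_eq_Ioc, zero_add]
      rw [h0, Finset.sum_Ioc_consecutive u (Nat.zero_le _) (le_trans (Nat.sub_le N 1) hnN)]
    have hA : ∑ i ∈ Finset.Ioc 0 (N-1), u i ≤ ((N:ℝ) - 1) * C := by
      have h1 := Finset.sum_le_card_nsmul (Finset.Ioc 0 (N-1)) u C
        (fun i hi => le_of_abs_le (hu i (Finset.mem_Ioc.1 hi).1))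
      rw [Nat.card_Ioc, Nat.sub_zero, nsmul_eq_mul, Nat.cast_sub hN1, Nat.cast_one] at h1
      exact h1
    have hD : ∑ i ∈ Finset.Ioc (N-1) n, u i ≤ ((n:ℝ) - N + 1) * (L + d/2) := by
      have h1 := Finset.sum_le_card_nsmul (Finset.Ioc (N-1) n) u (L + d/2)
        (fun i hi => by
          have hi1 : N - 1 < i := (Finset.mem_Ioc.1 hi).1
          have hi2 : N₀ ≤ i := by omega
          exact (hN₀ i hi2).le)
      rw [Nat.card_Ioc, nsmul_eq_mul, Nat.cast_sub (le_trans (Nat.sub_le N 1) hnN),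
        Nat.cast_sub hN1, Nat.cast_one] at h1
      calc ∑ i ∈ Finset.Ioc (N-1) n, u i ≤ ((n:ℝ) - ((N:ℝ) - 1)) * (L + d/2) := h1
        _ = ((n:ℝ) - N + 1) * (L + d/2) := by ring
    have hceil : 2*K/d ≤ (n:ℝ) := by
      have h1 : 2*K/d ≤ (⌈2*K/d⌉₊:ℝ) := Nat.le_ceil _
      have h2 : (⌈2*K/d⌉₊:ℝ) ≤ n := by exact_mod_cast le_trans (le_max_right N _) hn
      linarith
    have hKn : K ≤ d * n / 2 := by
      rw [div_le_iff₀ hd] at hceil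
      linarith
    have habs1 : L ≤ |L| := le_abs_self L
    have habs2 : -|L| ≤ L := neg_abs_le L
    rw [hsplit, div_le_iff₀ hn0]
    have hkey : ((N:ℝ) - 1) * ((|L| + L) + 3*(d/2)) ≥ 0 :=
      mul_nonneg (by linarith) (by linarith)
    nlinarith [hA, hD, hKn, hkey, hK0]
  exact limsup_le_of_le hvcob hev2

end B2aux

set_option maxHeartbeats 1000000 in
/-- **Theorem 2, part 2.**  Let `a` be bounded with divergent Birkhoff averages
`B_n`, with cluster set `[α₀, β₀]`.  If for every `γ ∈ [α₀, β₀]` there is `ε > 0`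
such that `limsup_i n_{i+1}(γ, ε) / n_i(γ, ε) = ∞`, then `⋂_k [α_k, β_k]` is a
nondegenerate interval, i.e. `sup_k α_k < inf_k β_k` (type B2). -/
theorem type_B2_of_unbounded_return_ratios (a : ℕ → ℝ)
    (hbdd : ∃ C : ℝ, ∀ n, |a n| ≤ C)
    (hdiv : ¬ ∃ L : ℝ, Tendsto (birk a) atTop (𝓝 L))
    (h : ∀ γ ∈ Set.Icc (liminf (birk a) atTop) (limsup (birk a) atTop), ∃ ε : ℝ, 0 < ε ∧
      limsup (fun i : ℕ => (((returnTimes (birk a) γ ε (i + 1) : ℝ) /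
        (returnTimes (birk a) γ ε i : ℝ) : ℝ) : EReal)) atTop = ⊤) :
    (⨆ k : ℕ, liminf (fun n : ℕ => holderMeans (birk a) k n) atTop) <
      ⨅ k : ℕ, limsup (fun n : ℕ => holderMeans (birk a) k n) atTop := by
  classical
  obtain ⟨C₀, hC₀⟩ := hbdd
  set C : ℝ := max C₀ 1 with hCdef
  have hC1 : (1:ℝ) ≤ C := le_max_right _ _
  have hC : (0:ℝ) ≤ C := by linarith
  have ha : ∀ n, |a n| ≤ C := fun n => (hC₀ n).trans (le_max_left _ _)
  have hB : ∀ n, |birk a n| ≤ C := B2aux.birk_bound a C hC ha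
  have hB1 : ∀ m, 1 ≤ m → |birk a m| ≤ C := fun m _ => hB m
  have hstep := B2aux.birk_step a C hC ha
  have hHbd : ∀ k m, 1 ≤ m → |holderMeans (birk a) k m| ≤ C := B2aux.holder_bound _ C hC hB1
  set al : ℕ → ℝ := fun k => liminf (fun n : ℕ => holderMeans (birk a) k n) atTop with hal
  set be : ℕ → ℝ := fun k => limsup (fun n : ℕ => holderMeans (birk a) k n) atTop with hbe
  have hble : ∀ k, IsBoundedUnder (· ≤ ·) atTop (fun n : ℕ => holderMeans (birk a) k n) :=
    fun k => isBoundedUnder_of_eventually_le (a := C)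
      ((eventually_ge_atTop 1).mono fun m hm => le_of_abs_le (hHbd k m hm))
  have hbge : ∀ k, IsBoundedUnder (· ≥ ·) atTop (fun n : ℕ => holderMeans (birk a) k n) :=
    fun k => isBoundedUnder_of_eventually_ge (a := -C)
      ((eventually_ge_atTop 1).mono fun m hm => neg_le_of_abs_le (hHbd k m hm))
  have halbe : ∀ k, al k ≤ be k := fun k => liminf_le_limsup (hble k) (hbge k)
  have hbe_anti : ∀ k, be (k+1) ≤ be k := fun k =>
    B2aux.cesaro_limsup (holderMeans (birk a) k) C hC (hHbd k)
  have hbe0 : ∀ k, be k ≤ be 0 := by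
    intro k
    induction k with
    | zero => exact le_rfl
    | succ k ih => exact (hbe_anti k).trans ih
  have hbeC : ∀ k, be k ≤ C := fun k =>
    limsup_le_of_le (IsBoundedUnder.isCoboundedUnder_le (hbge k))
      ((eventually_ge_atTop 1).mono fun m hm => le_of_abs_le (hHbd k m hm))
  have hbdd_al : BddAbove (Set.range al) := ⟨C, by rintro x ⟨k, rfl⟩; exact (halbe k).trans (hbeC k)⟩
  set A : ℝ := ⨆ k, al k with hA
  have hA0 : al 0 ≤ A := le_ciSup hbdd_al 0
  have hAb0 : A ≤ be 0 := ciSup_le fun k => (halbe k).trans (hbe0 k)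
  obtain ⟨ε, hε, htop⟩ := h A ⟨hA0, hAb0⟩
  set S : ℕ → Prop := fun n => 1 ≤ n ∧ A - ε < birk a n ∧ birk a n < A + ε with hSdef
  -- frequently big ratios
  have hfreq : ∀ R : ℝ, ∃ᶠ i in atTop, R < (Nat.nth S (i+1) : ℝ) / (Nat.nth S i : ℝ) := by
    intro R
    have h1 : ((R:EReal)) < limsup (fun i : ℕ => (((returnTimes (birk a) A ε (i + 1) : ℝ) /
        (returnTimes (birk a) A ε i : ℝ) : ℝ) : EReal)) atTop := by
      rw [htop]; exact EReal.coe_lt_top R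
    have h2 := frequently_lt_of_lt_limsup (by isBoundedDefault) h1
    refine h2.mono fun i hi => ?_
    exact_mod_cast hi
  -- S is infinite
  have hSinf : (setOf S).Infinite := by
    by_contra hfin
    rw [Set.not_infinite] at hfin
    obtain ⟨N₁, hN₁⟩ : ∃ N₁, ∀ n ∈ setOf S, n ≤ N₁ := by
      rcases hfin.bddAbove with ⟨N₁, hb⟩
      exact ⟨N₁, fun n hn => hb hn⟩
    set N : ℕ := max (N₁ + 1) (⌈C/ε⌉₊ + 1) with hNdef2
    have hNm1 : N₁ + 1 ≤ N := le_max_left _ _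
    have hNm2 : ⌈C/ε⌉₊ + 1 ≤ N := le_max_right _ _
    have hNS : ∀ n, N ≤ n → ¬ S n := by
      intro n hn hSn
      have := hN₁ n hSn
      omega
    have hout : ∀ n, N ≤ n → birk a n ≤ A - ε ∨ A + ε ≤ birk a n := by
      intro n hn
      by_contra hcon
      push_neg at hcon
      exact hNS n hn ⟨by omega, hcon.1, hcon.2⟩
    have hsmall : ∀ n, N ≤ n → 2*C/((n:ℝ)+1) < 2*ε := by
      intro n hn
      have h1 : (⌈C/ε⌉₊:ℝ) ≤ n := by exact_mod_cast (by omega : ⌈C/ε⌉₊ ≤ n)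
      have h2 : C/ε ≤ (n:ℝ) := le_trans (Nat.le_ceil _) h1
      have h3 : C ≤ ε * n := by rw [div_le_iff₀ hε] at h2; linarith
      have hn0 : (0:ℝ) < (n:ℝ)+1 := by positivity
      rw [div_lt_iff₀ hn0]
      nlinarith
    have hpers : ∀ j, (A + ε ≤ birk a N → A + ε ≤ birk a (N + j)) ∧
        (birk a N ≤ A - ε → birk a (N + j) ≤ A - ε) := by
      intro j
      induction j with
      | zero => exact ⟨fun h => h, fun h => h⟩
      | succ j ih =>
        have hs := hstep (N + j)
        have habs := abs_le.1 hs
        have hsm := hsmall (N + j) (Nat.le_add_right _ _)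
        have hout2 := hout (N + j + 1) (by omega)
        constructor
        · intro hup
          have h1 := ih.1 hup
          rcases hout2 with h2 | h2
          · exfalso; linarith [habs.1]
          · exact h2
        · intro hdn
          have h1 := ih.2 hdn
          rcases hout2 with h2 | h2
          · exact h2
          · exfalso; linarith [habs.2]
    rcases hout N le_rfl with hdn | hup
    · have hev : ∀ᶠ n in atTop, birk a n ≤ A - ε := by
        rw [eventually_atTop]
        refine ⟨N, fun n hn => ?_⟩
        obtain ⟨j, rfl⟩ := Nat.exists_eq_add_of_le hn
        exact (hpers j).2 hdn
      have hls : limsup (birk a) atTop ≤ A - ε :=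
        limsup_le_of_le (IsBoundedUnder.isCoboundedUnder_le (hbge 0)) hev
      have : A ≤ A - ε := le_trans hAb0 hls
      linarith
    · have hev : ∀ᶠ n in atTop, A + ε ≤ birk a n := by
        rw [eventually_atTop]
        refine ⟨N, fun n hn => ?_⟩
        obtain ⟨j, rfl⟩ := Nat.exists_eq_add_of_le hn
        exact (hpers j).1 hup
      have hls : A + ε ≤ liminf (birk a) atTop :=
        le_liminf_of_le (IsBoundedUnder.isCoboundedUnder_ge (hble 0)) hev
      have : A + ε ≤ A := le_trans hls hA0
      linarith
  -- big-ratio gaps are one-sided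
  have hdisj : ∀ (R : ℝ) (N : ℕ),
      (∃ p q : ℕ, N ≤ p ∧ 1 ≤ p ∧ R * p ≤ q ∧ p < q ∧ ∀ m, p < m → m ≤ q → A + ε ≤ birk a m) ∨
      (∃ p q : ℕ, N ≤ p ∧ 1 ≤ p ∧ R * p ≤ q ∧ p < q ∧ ∀ m, p < m → m ≤ q → birk a m ≤ A - ε) := by
    intro R N
    set R₁ : ℝ := max R 1 with hR₁
    set N₁ : ℕ := max N (⌈C/ε⌉₊ + 1) with hN₁
    obtain ⟨i, hir, hiN⟩ := ((hfreq (R₁+2)).and_eventually (eventually_ge_atTop N₁)).exists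
    set p := Nat.nth S i with hpdef
    set q0 := Nat.nth S (i+1) with hq0def
    have hpmem : S p := Nat.nth_mem_of_infinite hSinf i
    have hp1 : 1 ≤ p := hpmem.1
    have hip : i ≤ p := (Nat.nth_strictMono hSinf).le_apply
    have hNp1 : N₁ ≤ p := le_trans hiN hip
    have hp0 : (0:ℝ) < p := by exact_mod_cast hp1
    have hp1' : (1:ℝ) ≤ p := by exact_mod_cast hp1
    have hR11 : (1:ℝ) ≤ R₁ := le_max_right _ _
    have hratio : (R₁+2) * p < q0 := by
      rw [lt_div_iff₀ hp0] at hir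
      exact hir
    have hq03 : p + 2 < q0 := by
      have h3 : ((p + 2:ℕ):ℝ) < (q0:ℝ) := by push_cast; nlinarith
      exact_mod_cast h3
    set q := q0 - 1 with hqdef
    have hq0q : q + 1 = q0 := by omega
    have hpq : p < q := by omega
    have hq1 : (q:ℝ) = (q0:ℝ) - 1 := by
      rw [← hq0q]; push_cast; ring
    have hRq : R * p ≤ q := by
      have hRR : R ≤ R₁ := le_max_left _ _
      have h1 : R * p ≤ R₁ * p := by nlinarith
      nlinarith [hratio]
    have hnotS : ∀ m, p < m → m ≤ q → ¬ S m := by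
      intro m hm hmq hSm
      have h1 : i < Nat.count S m := (Nat.lt_nth_iff_count_lt hSinf).2 hm
      have h2 : q0 ≤ m := by
        have h3 := (Nat.nth_le_nth hSinf).2 (Nat.succ_le_of_lt h1)
        rwa [Nat.nth_count hSm] at h3
      omega
    have hout : ∀ m, p < m → m ≤ q → birk a m ≤ A - ε ∨ A + ε ≤ birk a m := by
      intro m hm hmq
      by_contra hcon
      push_neg at hcon
      exact hnotS m hm hmq ⟨by omega, hcon.1, hcon.2⟩
    have hsmall : ∀ m:ℕ, p ≤ m → 2*C/((m:ℝ)+1) < 2*ε := by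
      intro m hm
      have hceil : ⌈C/ε⌉₊ + 1 ≤ N₁ := le_max_right _ _
      have h1 : (⌈C/ε⌉₊:ℝ) ≤ m := by exact_mod_cast (by omega : ⌈C/ε⌉₊ ≤ m)
      have h2 : C/ε ≤ (m:ℝ) := le_trans (Nat.le_ceil _) h1
      have h3 : C ≤ ε * m := by rw [div_le_iff₀ hε] at h2; linarith
      have hm0 : (0:ℝ) < (m:ℝ)+1 := by positivity
      rw [div_lt_iff₀ hm0]
      nlinarith
    have hp1q : p + 1 ≤ q := by omega
    have hpers : ∀ j, p + 1 + j ≤ q →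
        (A + ε ≤ birk a (p+1) → A + ε ≤ birk a (p+1+j)) ∧
        (birk a (p+1) ≤ A - ε → birk a (p+1+j) ≤ A - ε) := by
      intro j
      induction j with
      | zero => exact fun _ => ⟨fun hx => hx, fun hx => hx⟩
      | succ j ih =>
        intro hj
        obtain ⟨ih1, ih2⟩ := ih (by omega)
        have hs := hstep (p + 1 + j)
        have habs := abs_le.1 hs
        have hsm := hsmall (p + 1 + j) (by omega)
        have hout2 := hout (p + 1 + j + 1) (by omega) (by omega)
        constructor
        · intro hup
          have h1 := ih1 hup
          rcases hout2 with h2 | h2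
          · exfalso; linarith [habs.1]
          · exact h2
        · intro hdn
          have h1 := ih2 hdn
          rcases hout2 with h2 | h2
          · exact h2
          · exfalso; linarith [habs.2]
    rcases hout (p+1) (by omega) hp1q with hdn | hup
    · right
      refine ⟨p, q, le_trans (le_max_left _ _) hNp1, hp1, hRq, hpq, fun m hm hmq => ?_⟩
      obtain ⟨j, rfl⟩ := Nat.exists_eq_add_of_le (by omega : p + 1 ≤ m)
      exact (hpers j (by omega)).2 hdn
    · left
      refine ⟨p, q, le_trans (le_max_left _ _) hNp1, hp1, hRq, hpq, fun m hm hmq => ?_⟩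
      obtain ⟨j, rfl⟩ := Nat.exists_eq_add_of_le (by omega : p + 1 ≤ m)
      exact (hpers j (by omega)).1 hup
  -- conclude
  by_cases hcase : ∀ (R : ℝ) (N : ℕ), ∃ p q : ℕ, N ≤ p ∧ 1 ≤ p ∧ R * p ≤ q ∧ p < q ∧
      ∀ m, p < m → m ≤ q → A + ε ≤ birk a m
  · have hgap : B2aux.Gap (birk a) (A + ε) := hcase
    have hcC : A + ε ≤ C := B2aux.gap_le_C (birk a) C (A+ε) hB1 hgap
    have hk : ∀ k, A + ε ≤ be k := by
      intro k
      refine le_of_forall_sub_le fun δ hδ => ?_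
      have hg := B2aux.gap_holder (birk a) C hC hB1 k (A+ε) δ hcC hδ hgap
      have hfq := B2aux.gap_frequently _ _ hg
      exact le_limsup_of_frequently_le hfq (hble k)
    have hfinal : A + ε ≤ ⨅ k, be k := le_ciInf hk
    have hlt : A < A + ε := by linarith
    exact lt_of_lt_of_le hlt hfinal
  · push_neg at hcase
    obtain ⟨R₀, N₀, hR₀⟩ := hcase
    have hgap : B2aux.Gap (fun n => -(birk a n)) (ε - A) := by
      intro R N
      rcases hdisj (max R R₀) (max N N₀) with habove | hbelow
      · exfalso
        obtain ⟨p, q, h1, h2, h3, h4, h5⟩ := habove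
        have hp0 : (0:ℝ) ≤ p := Nat.cast_nonneg p
        have h3' : R₀ * p ≤ q := by nlinarith [le_max_right R R₀, h3]
        obtain ⟨m, hm1, hm2, hm3⟩ := hR₀ p q (le_trans (le_max_right _ _) h1) h2 h3' h4
        have := h5 m hm1 hm2
        linarith
      · obtain ⟨p, q, h1, h2, h3, h4, h5⟩ := hbelow
        refine ⟨p, q, le_trans (le_max_left _ _) h1, h2, ?_, h4, fun m hm hmq => ?_⟩
        · have hp0 : (0:ℝ) ≤ p := Nat.cast_nonneg p
          nlinarith [le_max_left R R₀, h3]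
        · have := h5 m hm hmq
          show ε - A ≤ -birk a m
          linarith
    have hnegbd : ∀ m, 1 ≤ m → |-(birk a m)| ≤ C := fun m hm => by
      rw [abs_neg]; exact hB m
    have hcC : ε - A ≤ C := B2aux.gap_le_C _ C _ hnegbd hgap
    have hk : ∀ k, al k ≤ A - ε := by
      intro k
      refine le_of_forall_sub_le fun δ hδ => ?_
      have hg := B2aux.gap_holder _ C hC hnegbd k (ε - A) δ hcC hδ hgap
      have hfq := B2aux.gap_frequently _ _ hg
      have hfq' : ∃ᶠ m in atTop, holderMeans (birk a) k m ≤ A - ε + δ := by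
        refine hfq.mono fun m hm => ?_
        rw [B2aux.holder_neg] at hm
        linarith
      have hli := liminf_le_of_frequently_le hfq' (hbge k)
      have : al k ≤ A - ε + δ := hli
      linarith
    have hAle : A ≤ A - ε := ciSup_le hk
    linarith
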